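/- arXiv:1309.1968 — 2 statements merged into one kernel-verified Lean document; each statement's English description precedes it below -/
import Mathlib

section
/- In the profinite completion Ĝ = F̂₂ of the free group F₂ = ⟨σ,α⟩, the centralizer of σ is the closed subgroup (topologically) generated by σ; likewise for α. Consequently, if f, f' are elements of the closure of the commutator subgroup [F̂₂, F̂₂] such that f = c₁ f' c₂ with c₁ in the centralizer of α and c₂ in the centralizer of σ, then c₁ = c₂ = 1 and f = f'. -/
/-- The free group on two generators `σ = of 0` and `α = of 1`. -/
abbrev F2 : Type := FreeGroup (Fin 2)

/-- The (normal, finite index) subgroups of `F₂` indexing the profinite completion. -/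
def NFI : Type := {N : Subgroup F2 // N.Normal ∧ N.FiniteIndex}

instance (N : NFI) : N.val.Normal := N.prop.1

instance (N : NFI) : TopologicalSpace (F2 ⧸ N.val) := ⊥

instance (N : NFI) : DiscreteTopology (F2 ⧸ N.val) := ⟨rfl⟩

instance (N : NFI) : IsTopologicalGroup (F2 ⧸ N.val) where
  continuous_mul := continuous_of_discreteTopology
  continuous_inv := continuous_of_discreteTopology

/-- The profinite completion `F̂₂` of `F₂`, realized as the inverse limit of all its finite
quotients `F₂/N`, for `N` normal of finite index, topologized as a subgroup of the product
of the (discrete, finite) quotients. -/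
def fullLimit : Subgroup ((N : NFI) → F2 ⧸ N.val) where
  carrier := {f | ∀ (N M : NFI) (h : N.val ≤ M.val),
    QuotientGroup.map N.val M.val (MonoidHom.id F2) (by simpa using h) (f N) = f M}
  one_mem' := by
    intro N M h
    simp
  mul_mem' := by
    intro a b ha hb N M h
    simp only [Pi.mul_apply, map_mul, ha N M h, hb N M h]
  inv_mem' := by
    intro a ha N M h
    simp only [Pi.inv_apply, map_inv, ha N M h]

/-- The product of the canonical projections `F₂ → F₂/N`. -/
def pif : F2 →* ((N : NFI) → F2 ⧸ N.val) :=
  Pi.monoidHom fun N => QuotientGroup.mk' N.val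

theorem pif_mem (g : F2) : pif g ∈ fullLimit := by
  intro N M h
  rfl

/-- The canonical homomorphism `F₂ → F̂₂`. -/
def toFull : F2 →* ↥fullLimit :=
  MonoidHom.codRestrict pif fullLimit pif_mem

----------------------------------------------------------------------
-- Auxiliary development
----------------------------------------------------------------------

open FreeGroup Subgroup

open scoped Classical

section Perm

variable (N : Subgroup F2) [N.Normal] (i : Fin 2)

/-- The image of the `i`-th generator in the quotient. -/
def sbar : F2 ⧸ N := QuotientGroup.mk (FreeGroup.of i)

/-- The permutation of `(F2 ⧸ N) × ZMod 2` which multiplies by `sbar` on the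
left and bumps the level each time the first coordinate returns to `1`. -/
noncomputable def jumpPerm : Equiv.Perm ((F2 ⧸ N) × ZMod 2) where
  toFun p := (sbar N i * p.1, if sbar N i * p.1 = 1 then p.2 + 1 else p.2)
  invFun p := ((sbar N i)⁻¹ * p.1, if p.1 = 1 then p.2 - 1 else p.2)
  left_inv p := by
    obtain ⟨h, k⟩ := p
    by_cases hc : sbar N i * h = 1
    · simp [hc, inv_eq_of_mul_eq_one_right hc]
    · simp [hc, inv_mul_cancel_left]
  right_inv p := by
    obtain ⟨h, k⟩ := p
    by_cases hc : h = 1 <;> simp [hc, mul_inv_cancel_left]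

/-- Left multiplication on the first coordinate. -/
def plainPerm (w : F2 ⧸ N) : Equiv.Perm ((F2 ⧸ N) × ZMod 2) :=
  (Equiv.mulLeft w).prodCongr (Equiv.refl _)

/-- The permutation representation used to analyze the centralizer of `of i`. -/
noncomputable def rho : F2 →* Equiv.Perm ((F2 ⧸ N) × ZMod 2) :=
  FreeGroup.lift fun j =>
    if j = i then jumpPerm N i else plainPerm N (QuotientGroup.mk (FreeGroup.of j))

lemma rho_of_fst (j : Fin 2) (p : (F2 ⧸ N) × ZMod 2) :
    ((rho N i) (FreeGroup.of j) p).1 = QuotientGroup.mk (FreeGroup.of j) * p.1 := by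
  rw [rho, FreeGroup.lift_apply_of]
  by_cases hj : j = i
  · subst hj
    simp [jumpPerm, sbar]
  · simp [hj, plainPerm]

lemma rho_fst (g : F2) : ∀ p : (F2 ⧸ N) × ZMod 2,
    ((rho N i) g p).1 = QuotientGroup.mk g * p.1 := by
  induction g using FreeGroup.induction_on with
  | C1 => intro p; simp
  | of x => exact rho_of_fst N i x
  | inv_of x hx =>
    intro p
    set q := ((rho N i) (FreeGroup.of x : F2))⁻¹ p with hqdef
    have h2 : (rho N i) (FreeGroup.of x : F2) q = p := Equiv.apply_symm_apply _ _
    have h3 := hx q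
    rw [h2] at h3
    have h4 : q.1 = (QuotientGroup.mk (FreeGroup.of x : F2) : F2 ⧸ N)⁻¹ * p.1 := by
      rw [h3, inv_mul_cancel_left]
    have h5 : (((rho N i) ((FreeGroup.of x : F2)⁻¹)) p).1 = q.1 := by
      rw [hqdef, _root_.map_inv]
    rw [h5, h4]
    simp
  | mul x y hxy hy =>
    intro p
    rw [_root_.map_mul, Equiv.Perm.mul_apply, hxy, hy, QuotientGroup.mk_mul, mul_assoc]

end Perm

set_option linter.unusedSectionVars false

section FinQuot

variable (N : Subgroup F2) [N.Normal] [N.FiniteIndex] (i : Fin 2)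

lemma rho_pow_of_not_mem {h : F2 ⧸ N} (hh : h ∉ Subgroup.zpowers (sbar N i))
    (k : ZMod 2) (n : ℕ) :
    (rho N i) (FreeGroup.of i ^ n) (h, k) = ((sbar N i) ^ n * h, k) := by
  induction n with
  | zero => simp
  | succ n ih =>
    have hne : (sbar N i) ^ (n + 1) * h ≠ 1 := by
      intro hcon
      exact hh ⟨-(n+1 : ℤ), by
        show (sbar N i) ^ (-(n+1 : ℤ)) = h
        have : (sbar N i) ^ ((n+1 : ℕ) : ℤ) = (sbar N i) ^ (n+1) := zpow_natCast _ _
        rw [show (-(n+1 : ℤ)) = -((n+1 : ℕ) : ℤ) by push_cast; ring, zpow_neg, this,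
          inv_eq_of_mul_eq_one_right hcon]⟩
    rw [pow_succ', _root_.map_mul, Equiv.Perm.mul_apply, ih]
    have hof : (rho N i) (FreeGroup.of i) = jumpPerm N i := by
      rw [rho, FreeGroup.lift_apply_of, if_pos rfl]
    rw [hof]
    show ((sbar N i * ((sbar N i) ^ n * h)),
        if sbar N i * ((sbar N i) ^ n * h) = 1 then k + 1 else k) = _
    rw [← mul_assoc, ← pow_succ']
    rw [if_neg hne]

lemma rho_orderOf_fixed {h : F2 ⧸ N} (hh : h ∉ Subgroup.zpowers (sbar N i)) (k : ZMod 2) :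
    (rho N i) (FreeGroup.of i ^ orderOf (sbar N i)) (h, k) = (h, k) := by
  rw [rho_pow_of_not_mem N i hh k, pow_orderOf_eq_one, one_mul]

lemma rho_cycle_pow (n : ℕ) (hn : n < orderOf (sbar N i)) :
    (rho N i) (FreeGroup.of i ^ n) ((1 : F2 ⧸ N), (0 : ZMod 2)) = ((sbar N i) ^ n, 0) := by
  induction n with
  | zero => simp
  | succ n ih =>
    have hlt : n < orderOf (sbar N i) := Nat.lt_of_succ_lt hn
    have hne : (sbar N i) ^ (n + 1) ≠ 1 :=
      pow_ne_one_of_lt_orderOf (Nat.succ_ne_zero n) hn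
    rw [pow_succ', _root_.map_mul, Equiv.Perm.mul_apply, ih hlt]
    have hof : (rho N i) (FreeGroup.of i) = jumpPerm N i := by
      rw [rho, FreeGroup.lift_apply_of, if_pos rfl]
    rw [hof]
    show ((sbar N i * (sbar N i) ^ n),
        if sbar N i * (sbar N i) ^ n = 1 then (0 : ZMod 2) + 1 else 0) = _
    rw [← pow_succ', if_neg hne]

lemma rho_cycle_top :
    (rho N i) (FreeGroup.of i ^ orderOf (sbar N i)) ((1 : F2 ⧸ N), (0 : ZMod 2))
      = (1, 1) := by
  have hfin : Finite (F2 ⧸ N) := Subgroup.finite_quotient_of_finiteIndex (H := N)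
  have hd : 0 < orderOf (sbar N i) := orderOf_pos _
  obtain ⟨d, hdeq⟩ : ∃ d, orderOf (sbar N i) = d + 1 :=
    ⟨orderOf (sbar N i) - 1, by omega⟩
  rw [hdeq, pow_succ', _root_.map_mul, Equiv.Perm.mul_apply,
    rho_cycle_pow N i d (by omega)]
  have hof : (rho N i) (FreeGroup.of i) = jumpPerm N i := by
    rw [rho, FreeGroup.lift_apply_of, if_pos rfl]
  rw [hof]
  show ((sbar N i * (sbar N i) ^ d),
      if sbar N i * (sbar N i) ^ d = 1 then (0 : ZMod 2) + 1 else 0) = _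
  rw [← pow_succ', ← hdeq, pow_orderOf_eq_one, if_pos rfl]
  norm_num

lemma mem_zpowers_of_commute (g : F2)
    (hc : (rho N i) g * (rho N i) (FreeGroup.of i)
        = (rho N i) (FreeGroup.of i) * (rho N i) g) :
    (QuotientGroup.mk g : F2 ⧸ N) ∈ Subgroup.zpowers (sbar N i) := by
  by_contra hmem
  set d := orderOf (sbar N i)
  set q := (rho N i) g ((1 : F2 ⧸ N), (0 : ZMod 2)) with hq
  have hq1 : q.1 = QuotientGroup.mk g := by
    rw [hq, rho_fst N i g]
    simp
  have hcom : Commute ((rho N i) g) ((rho N i) (FreeGroup.of i)) := hc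
  have hcp : ((rho N i) (FreeGroup.of i ^ d)) * (rho N i) g
      = (rho N i) g * (rho N i) (FreeGroup.of i ^ d) := by
    rw [map_pow]
    exact ((hcom.pow_right d).symm :)
  have h1 : (rho N i) (FreeGroup.of i ^ d) q = q := by
    have := rho_orderOf_fixed N i (h := q.1) (by rwa [hq1]) q.2
    simpa using this
  have h2 : (rho N i) (FreeGroup.of i ^ d) q
      = (rho N i) g ((1 : F2 ⧸ N), (1 : ZMod 2)) := by
    rw [hq, ← Equiv.Perm.mul_apply, hcp, Equiv.Perm.mul_apply, rho_cycle_top]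
  rw [h2] at h1
  have := (rho N i) g |>.injective (h1.trans hq)
  have : ((1 : ZMod 2)) = 0 := congrArg Prod.snd this
  exact absurd this (by decide)

lemma ker_rho_le : ((rho N i)).ker ≤ N := by
  intro g hg
  have h1 := rho_fst N i g ((1 : F2 ⧸ N), (0 : ZMod 2))
  rw [MonoidHom.mem_ker.mp hg] at h1
  have : (QuotientGroup.mk g : F2 ⧸ N) = 1 := by simpa using h1.symm
  rwa [QuotientGroup.eq_one_iff] at this

lemma finiteIndex_ker_rho : ((rho N i)).ker.FiniteIndex := by
  have hfin : Finite (F2 ⧸ N) := Subgroup.finite_quotient_of_finiteIndex (H := N)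
  have : Finite (F2 ⧸ (rho N i).ker) :=
    Finite.of_injective _ (QuotientGroup.kerLift_injective (rho N i))
  exact Subgroup.finiteIndex_of_finite_quotient

end FinQuot

----------------------------------------------------------------------
-- profinite-level lemmas
----------------------------------------------------------------------

lemma toFull_val (w : F2) (M : NFI) :
    ((toFull w : ↥fullLimit) : (K : NFI) → F2 ⧸ K.val) M = QuotientGroup.mk w := rfl

lemma coord_eq_pow (x : ↥fullLimit) (i : Fin 2)
    (hx : x ∈ Subgroup.centralizer {toFull (FreeGroup.of i)}) (N : NFI) :
    ∃ t : ℤ, (x : (K : NFI) → F2 ⧸ K.val) N = QuotientGroup.mk (FreeGroup.of i ^ t) := by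
  haveI hN1 : N.val.Normal := N.prop.1
  haveI hN2 : N.val.FiniteIndex := N.prop.2
  set ρ := rho N.val i with hρ
  let M : NFI := ⟨ρ.ker, inferInstance, finiteIndex_ker_rho N.val i⟩
  obtain ⟨g, hg⟩ := QuotientGroup.mk_surjective ((x : (K : NFI) → F2 ⧸ K.val) M)
  -- commuting at coordinate M
  have hcomm := Subgroup.mem_centralizer_iff.mp hx (toFull (FreeGroup.of i)) rfl
  have hcoord := congrArg (fun y : ↥fullLimit => (y : (K : NFI) → F2 ⧸ K.val) M) hcomm
  have hc2 : (QuotientGroup.mk (FreeGroup.of i * g) : F2 ⧸ M.val)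
      = QuotientGroup.mk (g * FreeGroup.of i) := by
    have lhs : (QuotientGroup.mk (FreeGroup.of i * g) : F2 ⧸ M.val)
        = QuotientGroup.mk (FreeGroup.of i) * QuotientGroup.mk g := rfl
    have rhs : (QuotientGroup.mk (g * FreeGroup.of i) : F2 ⧸ M.val)
        = QuotientGroup.mk g * QuotientGroup.mk (FreeGroup.of i) := rfl
    rw [lhs, rhs, hg]
    exact hcoord
  have hker : (FreeGroup.of i * g)⁻¹ * (g * FreeGroup.of i) ∈ ρ.ker :=
    QuotientGroup.eq.mp hc2
  have hrw : ρ ((FreeGroup.of i * g)⁻¹ * (g * FreeGroup.of i)) = 1 :=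
    MonoidHom.mem_ker.mp hker
  have heq : ρ (FreeGroup.of i * g) = ρ (g * FreeGroup.of i) := by
    rw [_root_.map_mul, _root_.map_inv] at hrw
    exact (inv_mul_eq_one.mp hrw)
  have hcom' : ρ g * ρ (FreeGroup.of i) = ρ (FreeGroup.of i) * ρ g := by
    rw [_root_.map_mul, _root_.map_mul] at heq
    exact heq.symm
  have hz := mem_zpowers_of_commute N.val i g hcom'
  obtain ⟨t, ht⟩ := Subgroup.mem_zpowers_iff.mp hz
  refine ⟨t, ?_⟩
  have hprop := x.prop M N (ker_rho_le N.val i)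
  rw [← hg] at hprop
  rw [← hprop, QuotientGroup.map_mk]
  simp only [MonoidHom.id_apply]
  have hzp : (QuotientGroup.mk (FreeGroup.of i ^ t) : F2 ⧸ N.val)
      = (QuotientGroup.mk (FreeGroup.of i) : F2 ⧸ N.val) ^ t := rfl
  rw [hzp, ← ht]
  rfl

lemma NFI_inf_normal (I : Finset NFI) : (I.inf (fun K : NFI => K.val)).Normal := by
  induction I using Finset.induction_on with
  | empty => simpa using (inferInstance : (⊤ : Subgroup F2).Normal)
  | @insert a s ha ih =>
    rw [Finset.inf_insert]
    haveI := a.prop.1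
    haveI := ih
    infer_instance

lemma NFI_inf_finiteIndex (I : Finset NFI) : (I.inf (fun K : NFI => K.val)).FiniteIndex := by
  induction I using Finset.induction_on with
  | empty => simpa using (inferInstance : (⊤ : Subgroup F2).FiniteIndex)
  | @insert a s ha ih =>
    rw [Finset.inf_insert]
    haveI := a.prop.2
    haveI := ih
    infer_instance

lemma mem_closure_zpowers (x : ↥fullLimit) (w : F2)
    (hx : ∀ N : NFI, ∃ t : ℤ,
      (x : (K : NFI) → F2 ⧸ K.val) N = QuotientGroup.mk (w ^ t)) :
    x ∈ (Subgroup.zpowers (toFull w)).topologicalClosure := by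
  have hmem : x ∈ _root_.closure
      ((Subgroup.zpowers (toFull w) : Subgroup ↥fullLimit) : Set ↥fullLimit) := by
    rw [mem_closure_iff]
    intro o ho hxo
    obtain ⟨V, hV, rfl⟩ := isOpen_induced_iff.mp ho
    obtain ⟨I, u, hIu, hsub⟩ := isOpen_pi_iff.mp hV _ hxo
    set M : NFI := ⟨I.inf (fun K : NFI => K.val), NFI_inf_normal I, NFI_inf_finiteIndex I⟩ with hM
    obtain ⟨t, ht⟩ := hx M
    refine ⟨(toFull w) ^ t, ?_, Subgroup.zpow_mem_zpowers _ _⟩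
    show ((toFull w) ^ t : ↥fullLimit).val ∈ V
    refine hsub ?_
    rw [Set.mem_pi]
    intro K hK
    have hval : ((toFull w) ^ t : ↥fullLimit).val K
        = (x : (K : NFI) → F2 ⧸ K.val) K := by
      have h1 : ((toFull w) ^ t : ↥fullLimit) = toFull (w ^ t) := (map_zpow toFull w t).symm
      rw [h1, toFull_val]
      have hprop := x.prop M K (Finset.inf_le hK)
      rw [ht] at hprop
      rw [← hprop, QuotientGroup.map_mk]
      rfl
    rw [hval]
    exact (hIu K hK).2
  exact hmem

lemma isClosed_centralizer (y : ↥fullLimit) :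
    IsClosed ((Subgroup.centralizer {y} : Subgroup ↥fullLimit) : Set ↥fullLimit) := by
  have hset : ((Subgroup.centralizer {y} : Subgroup ↥fullLimit) : Set ↥fullLimit)
      = {z : ↥fullLimit | y * z = z * y} := by
    ext z
    simp [Subgroup.mem_centralizer_iff]
  rw [hset]
  exact isClosed_eq (continuous_const.mul continuous_id) (continuous_id.mul continuous_const)

lemma centralizer_eq (i : Fin 2) :
    Subgroup.centralizer {toFull (FreeGroup.of i)} =
      (Subgroup.zpowers (toFull (FreeGroup.of i))).topologicalClosure := by
  apply le_antisymm
  · intro x hx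
    exact mem_closure_zpowers x (FreeGroup.of i) (fun N => coord_eq_pow x i hx N)
  · apply Subgroup.topologicalClosure_minimal
    · rw [Subgroup.zpowers_le]
      refine Subgroup.mem_centralizer_iff.mpr ?_
      rintro g hg
      rw [Set.mem_singleton_iff] at hg
      rw [hg]
    · exact isClosed_centralizer _

----------------------------------------------------------------------
-- exponent homomorphisms
----------------------------------------------------------------------

/-- The homomorphism recording the total exponent of the `i`-th generator mod `m`. -/
def expHom (m : ℕ) (i : Fin 2) : F2 →* Multiplicative (ZMod m) :=
  FreeGroup.lift fun j => if j = i then Multiplicative.ofAdd (1 : ZMod m) else 1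

lemma expHom_of_self (m : ℕ) (i : Fin 2) :
    expHom m i (FreeGroup.of i) = Multiplicative.ofAdd (1 : ZMod m) := by
  rw [expHom, FreeGroup.lift_apply_of, if_pos rfl]

lemma expHom_of_ne (m : ℕ) {i j : Fin 2} (h : j ≠ i) :
    expHom m i (FreeGroup.of j) = 1 := by
  rw [expHom, FreeGroup.lift_apply_of, if_neg h]

/-- The kernel of `expHom` as an element of `NFI`. -/
def expNFI (m : ℕ) [NeZero m] (i : Fin 2) : NFI :=
  ⟨(expHom m i).ker, inferInstance, by
    have : Finite (F2 ⧸ (expHom m i).ker) :=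
      Finite.of_injective _ (QuotientGroup.kerLift_injective (expHom m i))
    exact Subgroup.finiteIndex_of_finite_quotient⟩

/-- Evaluation of the `i`-th exponent on the profinite completion. -/
noncomputable def psi (m : ℕ) [NeZero m] (i : Fin 2) :
    ↥fullLimit →* Multiplicative (ZMod m) :=
  (QuotientGroup.kerLift (expHom m i)).comp
    ((Pi.evalMonoidHom (fun N : NFI => F2 ⧸ N.val) (expNFI m i)).comp fullLimit.subtype)

lemma psi_apply (m : ℕ) [NeZero m] (i : Fin 2) (x : ↥fullLimit) :
    psi m i x = QuotientGroup.kerLift (expHom m i)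
      ((x : (K : NFI) → F2 ⧸ K.val) (expNFI m i)) := rfl

lemma psi_eq_one_of_mem_commClosure (m : ℕ) [NeZero m] (i : Fin 2) (x : ↥fullLimit)
    (hx : x ∈ (commutator ↥fullLimit).topologicalClosure) : psi m i x = 1 := by
  have hle : (commutator ↥fullLimit) ≤ (psi m i).ker :=
    Abelianization.commutator_subset_ker _
  have hclosed : IsClosed (((psi m i).ker : Subgroup ↥fullLimit) : Set ↥fullLimit) := by
    have hset : (((psi m i).ker : Subgroup ↥fullLimit) : Set ↥fullLimit)
        = (fun z : ↥fullLimit => (z : (K : NFI) → F2 ⧸ K.val) (expNFI m i)) ⁻¹'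
            ((QuotientGroup.kerLift (expHom m i)) ⁻¹' {1}) := by
      ext z
      simp only [SetLike.mem_coe, MonoidHom.mem_ker, Set.mem_preimage, Set.mem_singleton_iff]
      rw [psi_apply]
      exact Iff.rfl
    rw [hset]
    exact IsClosed.preimage ((continuous_apply _).comp continuous_subtype_val)
      (isClosed_discrete _)
  exact Subgroup.topologicalClosure_minimal _ hle hclosed hx

lemma psi_of_centralizer (m : ℕ) [NeZero m] (i j : Fin 2) (c : ↥fullLimit)
    (hc : c ∈ Subgroup.centralizer {toFull (FreeGroup.of j)}) :
    ∃ t : ℤ, psi m i c = (expHom m i (FreeGroup.of j)) ^ t := by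
  obtain ⟨t, ht⟩ := coord_eq_pow c j hc (expNFI m i)
  refine ⟨t, ?_⟩
  rw [psi_apply, ht]
  show expHom m i (FreeGroup.of j ^ t) = _
  rw [map_zpow]

lemma psi_of_centralizer_ne (m : ℕ) [NeZero m] {i j : Fin 2} (h : j ≠ i) (c : ↥fullLimit)
    (hc : c ∈ Subgroup.centralizer {toFull (FreeGroup.of j)}) : psi m i c = 1 := by
  obtain ⟨t, ht⟩ := psi_of_centralizer m i j c hc
  rw [ht, expHom_of_ne m h, one_zpow]

lemma eq_one_of_psi (i : Fin 2) (c : ↥fullLimit)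
    (hc : c ∈ Subgroup.centralizer {toFull (FreeGroup.of i)})
    (hv : ∀ (m : ℕ) [NeZero m], psi m i c = 1) : c = 1 := by
  refine Subtype.ext (funext fun N => ?_)
  haveI hN1 : N.val.Normal := N.prop.1
  haveI hN2 : N.val.FiniteIndex := N.prop.2
  haveI hfin : Finite (F2 ⧸ N.val) := Subgroup.finite_quotient_of_finiteIndex (H := N.val)
  set m := Nat.card (F2 ⧸ N.val) with hm
  haveI : NeZero m := ⟨Nat.card_ne_zero.mpr ⟨inferInstance, inferInstance⟩⟩
  -- combined coordinate
  haveI := (expNFI m i).prop.1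
  haveI := (expNFI m i).prop.2
  set N' : NFI := ⟨N.val ⊓ (expNFI m i).val, inferInstance, inferInstance⟩ with hN'
  obtain ⟨t, ht⟩ := coord_eq_pow c i hc N'
  -- value of psi
  have hpsi : psi m i c = Multiplicative.ofAdd ((t : ZMod m)) := by
    have hprop := c.prop N' (expNFI m i) inf_le_right
    rw [ht] at hprop
    rw [psi_apply, ← hprop, QuotientGroup.map_mk, MonoidHom.id_apply]
    show expHom m i (FreeGroup.of i ^ t) = _
    rw [map_zpow, expHom_of_self]
    rw [← ofAdd_zsmul]
    congr 1
    rw [zsmul_eq_mul, mul_one]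
  have hzero : ((t : ZMod m)) = 0 := by
    have := hv m
    rw [hpsi] at this
    exact (ofAdd_eq_one.mp this :)
  obtain ⟨k, hk⟩ := (ZMod.intCast_zmod_eq_zero_iff_dvd t m).mp hzero
  -- coordinate at N
  have hprop := c.prop N' N inf_le_left
  rw [ht] at hprop
  have hc1 : (c : (K : NFI) → F2 ⧸ K.val) N = QuotientGroup.mk (FreeGroup.of i ^ t) := by
    rw [← hprop, QuotientGroup.map_mk, MonoidHom.id_apply]
  have horder : (QuotientGroup.mk (FreeGroup.of i ^ t) : F2 ⧸ N.val) = 1 := by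
    have : (QuotientGroup.mk (FreeGroup.of i ^ t) : F2 ⧸ N.val)
        = ((QuotientGroup.mk (FreeGroup.of i) : F2 ⧸ N.val)) ^ t := rfl
    rw [this, hk, zpow_mul]
    have hcard : ((QuotientGroup.mk (FreeGroup.of i) : F2 ⧸ N.val)) ^ (m : ℤ) = 1 := by
      rw [zpow_natCast, hm]
      exact pow_card_eq_one'
    rw [hcard, one_zpow]
  rw [hc1, horder]
  rfl

/-- In the profinite completion `F̂₂` of the free group on `σ, α`, the centralizer of `σ` is
the closed subgroup topologically generated by `σ`, and likewise for `α`. Consequently, if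
`f, f'` lie in the closure of the commutator subgroup of `F̂₂` and `f = c₁ f' c₂` with `c₁`
centralizing `α` and `c₂` centralizing `σ`, then `c₁ = c₂ = 1` and `f = f'`. -/
theorem centralizer_in_profinite_free_group :
    (Subgroup.centralizer {toFull (FreeGroup.of 0)} =
        (Subgroup.zpowers (toFull (FreeGroup.of 0))).topologicalClosure) ∧
    (Subgroup.centralizer {toFull (FreeGroup.of 1)} =
        (Subgroup.zpowers (toFull (FreeGroup.of 1))).topologicalClosure) ∧
    (∀ f f' : ↥fullLimit,
      f ∈ (commutator ↥fullLimit).topologicalClosure →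
      f' ∈ (commutator ↥fullLimit).topologicalClosure →
      ∀ c₁ ∈ Subgroup.centralizer {toFull (FreeGroup.of 1)},
      ∀ c₂ ∈ Subgroup.centralizer {toFull (FreeGroup.of 0)},
      f = c₁ * f' * c₂ → c₁ = 1 ∧ c₂ = 1 ∧ f = f') := by
  refine ⟨centralizer_eq 0, centralizer_eq 1, ?_⟩
  intro f f' hf hf' c₁ hc₁ c₂ hc₂ heq
  have key : ∀ (m : ℕ) [NeZero m] (i : Fin 2), psi m i c₁ * psi m i c₂ = 1 := by
    intro m _ i
    have h := congrArg (psi m i) heq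
    rw [_root_.map_mul, _root_.map_mul, psi_eq_one_of_mem_commClosure m i f hf,
      psi_eq_one_of_mem_commClosure m i f' hf', mul_one] at h
    exact h.symm
  have hc₂1 : c₂ = 1 := by
    refine eq_one_of_psi 0 c₂ hc₂ ?_
    intro m _
    have h1 : psi m 0 c₁ = 1 :=
      psi_of_centralizer_ne m (by decide : (1 : Fin 2) ≠ 0) c₁ hc₁
    have := key m 0
    rwa [h1, one_mul] at this
  have hc₁1 : c₁ = 1 := by
    refine eq_one_of_psi 1 c₁ hc₁ ?_
    intro m _
    have h2 : psi m 1 c₂ = 1 :=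
      psi_of_centralizer_ne m (by decide : (0 : Fin 2) ≠ 1) c₂ hc₂
    have := key m 1
    rwa [h2, mul_one] at this
  exact ⟨hc₁1, hc₂1, by rw [heq, hc₁1, hc₂1, one_mul, mul_one]⟩
end

section
/- Let X be a finite set of cardinality n equipped with permutations σ, α, φ satisfying σαφ = 1, such that the subgroup G = ⟨σ,α⟩ of S(X) acts transitively. Define the Euler characteristic χ = n_σ + n_α + n_φ − n, where n_σ, n_α, n_φ are the numbers of cycles (orbits) of σ, α, φ respectively on X. Then χ is even and χ ≤ 2. -/
set_option linter.unusedSectionVars false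

open Equiv Equiv.Perm Subgroup

section Counting
variable {A B : Type*} [Finite A] [Finite B]

/-- Surjective with a collision: codomain strictly smaller. -/
lemma card_succ_le_of_surj {f : A → B} (hf : Function.Surjective f)
    {p q : A} (hpq : p ≠ q) (him : f p = f q) : Nat.card B + 1 ≤ Nat.card A := by
  classical
  have := Fintype.ofFinite A
  have := Fintype.ofFinite B
  have hsurj : Function.Surjective (fun x : {x : A // x ≠ q} => f x) := by
    intro b
    obtain ⟨a, rfl⟩ := hf b
    by_cases ha : a = q
    · exact ⟨⟨p, hpq⟩, by simp [him, ha]⟩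
    · exact ⟨⟨a, ha⟩, rfl⟩
  have h1 : Nat.card B ≤ Nat.card {x : A // x ≠ q} := Nat.card_le_card_of_surjective _ hsurj
  have h2 : Nat.card {x : A // x ≠ q} + 1 = Nat.card A := by
    simp only [Nat.card_eq_fintype_card]
    rw [Fintype.card_subtype_compl (p := fun x => x = q)]
    have h3 : Fintype.card {x : A // x = q} = 1 := Fintype.card_subtype_eq q
    have h4 : 1 ≤ Fintype.card A := Fintype.card_pos_iff.mpr ⟨q⟩
    omega
  omega

/-- Surjective and injective away from one pair: domain ≤ codomain + 1. -/
lemma card_le_succ_of_almost_inj {f : A → B} {p q : A}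
    (hinj : ∀ x y, f x = f y → x = y ∨ (x = p ∧ y = q) ∨ (x = q ∧ y = p)) :
    Nat.card A ≤ Nat.card B + 1 := by
  classical
  have := Fintype.ofFinite A
  have := Fintype.ofFinite B
  by_cases hA : Nonempty A
  · obtain ⟨a0⟩ := hA
    have hinj' : Function.Injective (fun x : {x : A // x ≠ q} => f x) := by
      rintro ⟨x, hx⟩ ⟨y, hy⟩ hxy
      rcases hinj x y hxy with h | ⟨h1, h2⟩ | ⟨h1, h2⟩
      · exact Subtype.ext h
      · exact absurd h2 hy
      · exact absurd h1 hx
    have h1 : Nat.card {x : A // x ≠ q} ≤ Nat.card B := Nat.card_le_card_of_injective _ hinj'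
    have h2 : Nat.card A ≤ Nat.card {x : A // x ≠ q} + 1 := by
      simp only [Nat.card_eq_fintype_card]
      rw [Fintype.card_subtype_compl (p := fun x => x = q)]
      have h3 : Fintype.card {x : A // x = q} = 1 := Fintype.card_subtype_eq q
      omega
    omega
  · have : Nat.card A = 0 := by
      simp [Nat.card_eq_fintype_card, Fintype.card_eq_zero_iff.mpr (not_nonempty_iff.mp hA)]
    omega

end Counting

section Setoids
variable {A : Type*} [Finite A]

/-- The canonical map between quotients when `s` implies `t`. -/
def quotMap (s t : Setoid A) (h : ∀ x y, s.r x y → t.r x y) :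
    Quotient s → Quotient t :=
  fun x => Quotient.liftOn x (fun a => Quotient.mk t a) (fun a b hab => Quotient.sound (h a b hab))

lemma quotMap_mk {s t : Setoid A} (h : ∀ x y, s.r x y → t.r x y) (a : A) :
    quotMap s t h (Quotient.mk s a) = Quotient.mk t a := rfl

lemma quotMap_surj {s t : Setoid A} (h : ∀ x y, s.r x y → t.r x y) :
    Function.Surjective (quotMap s t h) := by
  intro y
  obtain ⟨a, ha⟩ := y.exists_rep
  exact ⟨Quotient.mk s a, ha⟩

/-- Finer relation gives bigger quotient. -/
lemma quot_card_le_of_imp {s t : Setoid A} (h : ∀ x y, s.r x y → t.r x y) :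
    Nat.card (Quotient t) ≤ Nat.card (Quotient s) :=
  Nat.card_le_card_of_surjective _ (quotMap_surj h)

/-- If `s ⊆ t`, `t` relates `a b` but `s` does not, the `t`-quotient is strictly smaller. -/
lemma quot_card_succ_le {s t : Setoid A} (h : ∀ x y, s.r x y → t.r x y)
    {a b : A} (hab : t.r a b) (hnab : ¬ s.r a b) :
    Nat.card (Quotient t) + 1 ≤ Nat.card (Quotient s) := by
  refine card_succ_le_of_surj (quotMap_surj h) (p := Quotient.mk s a) (q := Quotient.mk s b)
    (fun he => hnab (Quotient.exact he)) (Quotient.sound hab)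

/-- Merging the classes of `a` and `b` in a setoid. -/
def mergeSetoid (s : Setoid A) (a b : A) : Setoid A where
  r x y := s.r x y ∨ (s.r x a ∧ s.r b y) ∨ (s.r x b ∧ s.r a y)
  iseqv := by
    constructor
    · intro x; exact Or.inl (s.refl x)
    · rintro x y (h | ⟨h1, h2⟩ | ⟨h1, h2⟩)
      · exact Or.inl (s.symm h)
      · exact Or.inr (Or.inr ⟨s.symm h2, s.symm h1⟩)
      · exact Or.inr (Or.inl ⟨s.symm h2, s.symm h1⟩)
    · rintro x y z (h | ⟨h1, h2⟩ | ⟨h1, h2⟩) (h' | ⟨h1', h2'⟩ | ⟨h1', h2'⟩)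
      · exact Or.inl (s.trans h h')
      · exact Or.inr (Or.inl ⟨s.trans h h1', h2'⟩)
      · exact Or.inr (Or.inr ⟨s.trans h h1', h2'⟩)
      · exact Or.inr (Or.inl ⟨h1, s.trans h2 h'⟩)
      · exact Or.inl (s.trans (s.trans h1 (s.symm (s.trans h2 h1'))) h2')
      · exact Or.inl (s.trans h1 h2')
      · exact Or.inr (Or.inr ⟨h1, s.trans h2 h'⟩)
      · exact Or.inl (s.trans h1 h2')
      · exact Or.inl (s.trans (s.trans h1 (s.symm (s.trans h2 h1'))) h2')

lemma mergeSetoid_le (s : Setoid A) (a b : A) : ∀ x y, s.r x y → (mergeSetoid s a b).r x y :=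
  fun _ _ h => Or.inl h

lemma mergeSetoid_rab (s : Setoid A) (a b : A) : (mergeSetoid s a b).r a b :=
  Or.inr (Or.inl ⟨s.refl a, s.refl b⟩)

/-- Merging two classes drops the number of classes by at most one. -/
lemma quot_card_le_merge_succ (s : Setoid A) (a b : A) :
    Nat.card (Quotient s) ≤ Nat.card (Quotient (mergeSetoid s a b)) + 1 := by
  refine card_le_succ_of_almost_inj (f := quotMap s _ (mergeSetoid_le s a b))
    (p := Quotient.mk s a) (q := Quotient.mk s b) ?_
  intro x y
  obtain ⟨x', rfl⟩ := x.exists_rep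
  obtain ⟨y', rfl⟩ := y.exists_rep
  intro hxy
  rcases Quotient.exact hxy with h | ⟨h1, h2⟩ | ⟨h1, h2⟩
  · exact Or.inl (Quotient.sound h)
  · exact Or.inr (Or.inl ⟨Quotient.sound h1, Quotient.sound (s.symm h2)⟩)
  · exact Or.inr (Or.inr ⟨Quotient.sound h1, Quotient.sound (s.symm h2)⟩)

end Setoids

open Equiv Equiv.Perm Subgroup MulAction

/-- The number of cycles (orbits) of a permutation `g` on `X`. -/
noncomputable def nOrbits {X : Type*} (g : Equiv.Perm X) : ℕ :=
  Nat.card (MulAction.orbitRel.Quotient (Subgroup.zpowers g) X)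

section PermSetoid
variable {X : Type*} [Finite X]

/-- The same-cycle setoid of a permutation. -/
def scS (g : Perm X) : Setoid X :=
  ⟨g.SameCycle, ⟨fun x => SameCycle.refl g x, SameCycle.symm, SameCycle.trans⟩⟩

lemma scS_r {g : Perm X} {x y : X} : (scS g).r x y ↔ g.SameCycle x y := Iff.rfl

/-- The orbit setoid of a subgroup of permutations. -/
def grS (G : Subgroup (Perm X)) : Setoid X := MulAction.orbitRel G X

lemma grS_r {G : Subgroup (Perm X)} {x y : X} :
    (grS G).r x y ↔ ∃ h ∈ G, h y = x := by
  show (MulAction.orbitRel G X).r x y ↔ _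
  rw [MulAction.orbitRel_apply, MulAction.mem_orbit_iff]
  constructor
  · rintro ⟨⟨h, hh⟩, rfl⟩
    exact ⟨h, hh, rfl⟩
  · rintro ⟨h, hh, rfl⟩
    exact ⟨⟨h, hh⟩, rfl⟩

lemma grS_symm {G : Subgroup (Perm X)} {x y : X} (h : (grS G).r x y) : (grS G).r y x :=
  (grS G).symm h

noncomputable def nOrbG (G : Subgroup (Perm X)) : ℕ := Nat.card (Quotient (grS G))

lemma nOrbits_eq (g : Perm X) : nOrbits g = Nat.card (Quotient (scS g)) := by
  have : grS (zpowers g) = scS g := by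
    refine Setoid.ext fun x y => ?_
    rw [grS_r, scS_r]
    constructor
    · rintro ⟨h, hh, rfl⟩
      obtain ⟨k, rfl⟩ := Subgroup.mem_zpowers_iff.mp hh
      exact Equiv.Perm.SameCycle.symm ⟨k, by simp [Perm.smul_def]⟩
    · rintro ⟨k, rfl⟩
      exact ⟨(g ^ (-k) : Perm X), zpow_mem (Subgroup.mem_zpowers g) _, by simp [← Perm.mul_apply, ← zpow_add]⟩
  show Nat.card (Quotient (grS (zpowers g))) = _
  rw [this]

/-- Power-step closure: if a setoid is closed under applying `g`, it contains `SameCycle g`. -/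
lemma sameCycle_imp {g : Perm X} {s : Setoid X} (h : ∀ x, s.r x (g x)) :
    ∀ x y, (scS g).r x y → s.r x y := by
  have key : ∀ (i : ℕ) (x : X), s.r x ((g ^ i) x) := by
    intro i
    induction i with
    | zero => intro x; simpa using s.refl x
    | succ n ih =>
      intro x
      have : (g ^ (n + 1)) x = (g ^ n) (g x) := by
        rw [pow_succ, Perm.mul_apply]
      rw [this]
      exact s.trans (h x) (ih (g x))
  intro x y hxy
  obtain ⟨i, _, rfl⟩ := (scS_r.mp hxy).exists_pow_eq'
  exact key i x

/-- Closure-step: if a setoid is closed under each generator, it contains the orbit relation. -/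
lemma closure_imp {S : Set (Perm X)} {s : Setoid X} (h : ∀ g ∈ S, ∀ x, s.r x (g x)) :
    ∀ x y, (grS (closure S)).r x y → s.r x y := by
  have key : ∀ h' ∈ closure S, ∀ x, s.r x (h' x) := by
    intro h' hmem
    induction hmem using Subgroup.closure_induction with
    | mem g hg => exact h g hg
    | one => intro x; simpa using s.refl x
    | mul g₁ g₂ _ _ ih₁ ih₂ =>
      intro x
      rw [Perm.mul_apply]
      exact s.trans (ih₂ x) (ih₁ (g₂ x))
    | inv g _ ih =>
      intro x
      have := ih (g⁻¹ x)
      simp only [Perm.inv_def, Equiv.apply_symm_apply] at this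
      exact s.symm this
  intro x y hxy
  obtain ⟨h', hmem, rfl⟩ := grS_r.mp hxy
  exact s.symm (key h' hmem y)

end PermSetoid

open Equiv Equiv.Perm Subgroup

section SwapLemmas
variable {X : Type*} [Finite X] [DecidableEq X]

/-- Key iteration: if the forward `g`-orbit of `a` avoids `a` and `b` up to time `m`,
then `(g * swap a b)` pushes `b` along the `g`-orbit of `a`. -/
lemma swap_iter_key {g : Equiv.Perm X} {a b : X} (hab : a ≠ b) {m : ℕ}
    (havoid : ∀ i, 1 ≤ i → i < m → (g ^ i) a ≠ a ∧ (g ^ i) a ≠ b) :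
    ∀ j, 1 ≤ j → j ≤ m → ((g * Equiv.swap a b) ^ j) b = (g ^ j) a := by
  intro j
  induction j with
  | zero => omega
  | succ n ih =>
    intro _ hle
    rcases Nat.eq_zero_or_pos n with rfl | hn
    · simp [Equiv.swap_apply_right]
    · have h1 : ((g * Equiv.swap a b) ^ (n + 1)) b
          = (g * Equiv.swap a b) (((g * Equiv.swap a b) ^ n) b) := by
        rw [pow_succ', Equiv.Perm.mul_apply]
      have h2 := ih hn (by omega)
      have h3 := havoid n hn (by omega)
      rw [h1, h2, Equiv.Perm.mul_apply, Equiv.swap_apply_of_ne_of_ne h3.1 h3.2,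
        ← Equiv.Perm.mul_apply, ← pow_succ']

/-- If `a` and `b` are in different cycles of `g`, multiplying by the swap merges them. -/
lemma sameCycle_mul_swap_of_not_sameCycle {g : Equiv.Perm X} {a b : X} (hab : a ≠ b)
    (h : ¬ g.SameCycle a b) : (g * Equiv.swap a b).SameCycle a b := by
  have hfin : ∃ k : ℕ, 0 < k ∧ (g ^ k) a = a := by
    refine ⟨orderOf g, orderOf_pos g, by simp [pow_orderOf_eq_one]⟩
  classical
  let m := Nat.find hfin
  obtain ⟨hm0, hma⟩ : 0 < m ∧ (g ^ m) a = a := Nat.find_spec hfin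
  have havoid : ∀ i, 1 ≤ i → i < m → (g ^ i) a ≠ a ∧ (g ^ i) a ≠ b := by
    intro i h1 h2
    constructor
    · intro hia
      exact Nat.find_min hfin h2 ⟨h1, hia⟩
    · intro hib
      exact h ⟨(i : ℤ), by simpa using hib⟩
  have hkey := swap_iter_key hab havoid m hm0 le_rfl
  refine Equiv.Perm.SameCycle.symm ⟨(m : ℤ), ?_⟩
  rw [zpow_natCast, hkey, hma]

/-- If `a` and `b` are in the same cycle of `g`, multiplying by the swap splits them. -/
lemma not_sameCycle_mul_swap {g : Equiv.Perm X} {a b : X} (hab : a ≠ b)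
    (h : g.SameCycle a b) : ¬ (g * Equiv.swap a b).SameCycle a b := by
  classical
  have hfin : ∃ k : ℕ, 0 < k ∧ (g ^ k) a = b := by
    obtain ⟨i, hi1, _, hi3⟩ := h.exists_pow_eq''
    exact ⟨i, hi1, hi3⟩
  let m := Nat.find hfin
  obtain ⟨hm0, hmb⟩ : 0 < m ∧ (g ^ m) a = b := Nat.find_spec hfin
  have havoid : ∀ i, 1 ≤ i → i < m → (g ^ i) a ≠ a ∧ (g ^ i) a ≠ b := by
    intro i h1 h2
    refine ⟨fun hia => ?_, fun hib => Nat.find_min hfin h2 ⟨h1, hib⟩⟩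
    have : (g ^ (m - i)) a = b := by
      have : (g ^ (m - i)) ((g ^ i) a) = (g ^ m) a := by
        rw [← Equiv.Perm.mul_apply, ← pow_add, Nat.sub_add_cancel (le_of_lt h2)]
      rw [hia] at this
      rw [this, hmb]
    exact Nat.find_min hfin (by omega) ⟨by omega, this⟩
  set f := g * Equiv.swap a b with hf
  have hper : Function.IsPeriodicPt ⇑f m b := by
    show (⇑f)^[m] b = b
    rw [Equiv.Perm.iterate_eq_pow, swap_iter_key hab havoid m hm0 le_rfl, hmb]
  intro hcon
  obtain ⟨k, _, hk⟩ := hcon.symm.exists_pow_eq'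
  have hk' : (f ^ (k % m)) b = a := by
    have := hper.iterate_mod_apply k
    rw [Equiv.Perm.iterate_eq_pow, Equiv.Perm.iterate_eq_pow] at this
    rw [this, hk]
  rcases Nat.eq_zero_or_pos (k % m) with h0 | hpos
  · rw [h0] at hk'
    simp at hk'
    exact hab hk'.symm
  · have hlt : k % m < m := Nat.mod_lt _ hm0
    rw [swap_iter_key hab havoid _ hpos (le_of_lt hlt)] at hk'
    exact (havoid _ hpos hlt).1 hk'

end SwapLemmas

section CountSwap
variable {X : Type*} [Finite X] [DecidableEq X]

lemma sc_step (g : Equiv.Perm X) (x : X) : g.SameCycle x (g x) := ⟨1, by simp⟩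

/-- Multiplying by a swap decreases the number of cycles by at most one. -/
lemma nOrbits_le_mul_swap_succ (g : Equiv.Perm X) (a b : X) :
    nOrbits g ≤ nOrbits (g * Equiv.swap a b) + 1 := by
  set t := Equiv.swap a b with ht
  have himp : ∀ x y, (scS (g * t)).r x y → (mergeSetoid (scS g) a b).r x y := by
    refine sameCycle_imp ?_
    intro x
    rcases eq_or_ne x a with rfl | hxa
    · refine Or.inr (Or.inl ⟨(scS g).refl x, ?_⟩)
      show g.SameCycle b ((g * t) x)
      rw [Equiv.Perm.mul_apply, ht, Equiv.swap_apply_left]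
      exact sc_step g b
    · rcases eq_or_ne x b with rfl | hxb
      · refine Or.inr (Or.inr ⟨(scS g).refl x, ?_⟩)
        show g.SameCycle a ((g * t) x)
        rw [Equiv.Perm.mul_apply, ht, Equiv.swap_apply_right]
        exact sc_step g a
      · refine Or.inl ?_
        show g.SameCycle x ((g * t) x)
        rw [Equiv.Perm.mul_apply, ht, Equiv.swap_apply_of_ne_of_ne hxa hxb]
        exact sc_step g x
  have h1 := quot_card_le_merge_succ (scS g) a b
  have h2 := quot_card_le_of_imp himp
  rw [nOrbits_eq g, nOrbits_eq (g * t)]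
  omega

/-- Merge case: multiplying by a swap joining two distinct cycles. -/
lemma nOrbits_mul_swap_succ_le {g : Equiv.Perm X} {a b : X} (hab : a ≠ b)
    (h : ¬ g.SameCycle a b) : nOrbits (g * Equiv.swap a b) + 1 ≤ nOrbits g := by
  set t := Equiv.swap a b with ht
  have hB : (g * t).SameCycle a b := sameCycle_mul_swap_of_not_sameCycle hab h
  have himp : ∀ x y, (scS g).r x y → (scS (g * t)).r x y := by
    refine sameCycle_imp ?_
    intro x
    show (g * t).SameCycle x (g x)
    rcases eq_or_ne x a with rfl | hxa
    · have : g x = (g * t) b := by rw [Equiv.Perm.mul_apply, ht, Equiv.swap_apply_right]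
      rw [this]
      exact hB.trans (sc_step _ b)
    · rcases eq_or_ne x b with rfl | hxb
      · have : g x = (g * t) a := by rw [Equiv.Perm.mul_apply, ht, Equiv.swap_apply_left]
        rw [this]
        exact hB.symm.trans (sc_step _ a)
      · have : g x = (g * t) x := by
          rw [Equiv.Perm.mul_apply, ht, Equiv.swap_apply_of_ne_of_ne hxa hxb]
        rw [this]
        exact sc_step _ x
  have := quot_card_succ_le himp hB h
  rw [nOrbits_eq g, nOrbits_eq (g * t)]
  omega

/-- Split case: multiplying by a swap within one cycle adds exactly one cycle. -/
lemma nOrbits_mul_swap_eq_succ {g : Equiv.Perm X} {a b : X} (hab : a ≠ b)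
    (h : g.SameCycle a b) : nOrbits (g * Equiv.swap a b) = nOrbits g + 1 := by
  set t := Equiv.swap a b with ht
  have himp : ∀ x y, (scS (g * t)).r x y → (scS g).r x y := by
    refine sameCycle_imp ?_
    intro x
    show g.SameCycle x ((g * t) x)
    rcases eq_or_ne x a with rfl | hxa
    · rw [Equiv.Perm.mul_apply, ht, Equiv.swap_apply_left]
      exact h.trans (sc_step g b)
    · rcases eq_or_ne x b with rfl | hxb
      · rw [Equiv.Perm.mul_apply, ht, Equiv.swap_apply_right]
        exact h.symm.trans (sc_step g a)
      · rw [Equiv.Perm.mul_apply, ht, Equiv.swap_apply_of_ne_of_ne hxa hxb]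
        exact sc_step g x
  have hns : ¬ (g * t).SameCycle a b := not_sameCycle_mul_swap hab h
  have h1 := quot_card_succ_le himp h hns
  have h2 : nOrbits (g * t) ≤ nOrbits ((g * t) * t) + 1 := nOrbits_le_mul_swap_succ (g * t) a b
  have h3 : (g * t) * t = g := by
    rw [mul_assoc, ht, Equiv.swap_mul_self, mul_one]
  rw [h3] at h2
  rw [nOrbits_eq g, nOrbits_eq (g * t)] at *
  omega

/-- Multiplying by a swap changes the number of cycles by exactly one. -/
lemma nOrbits_mul_swap_cases (g : Equiv.Perm X) {a b : X} (hab : a ≠ b) :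
    nOrbits (g * Equiv.swap a b) = nOrbits g + 1 ∨
      nOrbits g = nOrbits (g * Equiv.swap a b) + 1 := by
  by_cases h : g.SameCycle a b
  · exact Or.inl (nOrbits_mul_swap_eq_succ hab h)
  · refine Or.inr ?_
    have h1 := nOrbits_mul_swap_succ_le hab h
    have h2 := nOrbits_le_mul_swap_succ g a b
    omega

end CountSwap

section GroupSwap
variable {X : Type*} [Finite X] [DecidableEq X]

lemma grS_mono {G H : Subgroup (Equiv.Perm X)} (hGH : G ≤ H) :
    ∀ x y, (grS G).r x y → (grS H).r x y := by
  intro x y h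
  obtain ⟨g, hg, rfl⟩ := grS_r.mp h
  exact grS_r.mpr ⟨g, hGH hg, rfl⟩

lemma nOrbG_mono {G H : Subgroup (Equiv.Perm X)} (hGH : G ≤ H) : nOrbG H ≤ nOrbG G :=
  quot_card_le_of_imp (grS_mono hGH)

lemma grS_step {G : Subgroup (Equiv.Perm X)} {g : Equiv.Perm X} (hg : g ∈ G) (x : X) :
    (grS G).r x (g x) :=
  grS_r.mpr ⟨g⁻¹, inv_mem hg, by simp⟩

/-- If `a` and `b` are already in the same `⟨σ, β⟩`-orbit, adjoining the swap of `a, b`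
does not change orbit counts relative to `⟨σ, β⟩`. -/
lemma nOrbG_le_of_rel {σ β : Equiv.Perm X} {a b : X}
    (hrel : (grS (Subgroup.closure {σ, β})).r a b) :
    nOrbG (Subgroup.closure {σ, β}) ≤
      nOrbG (Subgroup.closure ({σ, β, Equiv.swap a b} : Set (Equiv.Perm X))) := by
  set G' := Subgroup.closure ({σ, β} : Set (Equiv.Perm X))
  have himp : ∀ x y, (grS (Subgroup.closure ({σ, β, Equiv.swap a b} : Set (Equiv.Perm X)))).r x y →
      (grS G').r x y := by
    refine closure_imp ?_
    intro g hg x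
    rcases hg with rfl | rfl | rfl
    · exact grS_step (Subgroup.subset_closure (by simp)) x
    · exact grS_step (Subgroup.subset_closure (by simp)) x
    · rcases eq_or_ne x a with rfl | hxa
      · rw [Equiv.swap_apply_left]
        exact hrel
      · rcases eq_or_ne x b with rfl | hxb
        · rw [Equiv.swap_apply_right]
          exact (grS G').symm hrel
        · rw [Equiv.swap_apply_of_ne_of_ne hxa hxb]
  exact quot_card_le_of_imp himp

/-- Adjoining a swap to a generating set decreases the orbit count by at most one. -/
lemma nOrbG_le_succ (σ β : Equiv.Perm X) (a b : X) :
    nOrbG (Subgroup.closure {σ, β}) ≤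
      nOrbG (Subgroup.closure ({σ, β, Equiv.swap a b} : Set (Equiv.Perm X))) + 1 := by
  set G' := Subgroup.closure ({σ, β} : Set (Equiv.Perm X))
  have himp : ∀ x y, (grS (Subgroup.closure ({σ, β, Equiv.swap a b} : Set (Equiv.Perm X)))).r x y →
      (mergeSetoid (grS G') a b).r x y := by
    refine closure_imp ?_
    intro g hg x
    rcases hg with rfl | rfl | rfl
    · exact Or.inl (grS_step (Subgroup.subset_closure (by simp)) x)
    · exact Or.inl (grS_step (Subgroup.subset_closure (by simp)) x)
    · rcases eq_or_ne x a with rfl | hxa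
      · rw [Equiv.swap_apply_left]
        exact mergeSetoid_rab _ x b
      · rcases eq_or_ne x b with rfl | hxb
        · rw [Equiv.swap_apply_right]
          exact (mergeSetoid (grS G') a x).symm (mergeSetoid_rab _ a x)
        · rw [Equiv.swap_apply_of_ne_of_ne hxa hxb]
  have h1 := quot_card_le_merge_succ (grS G') a b
  have h2 := quot_card_le_of_imp himp
  unfold nOrbG
  omega

end GroupSwap

section Main
variable {X : Type*} [Finite X] [DecidableEq X]

lemma nOrbits_one : nOrbits (1 : Equiv.Perm X) = Nat.card X := by
  rw [nOrbits_eq]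
  refine (Nat.card_eq_of_bijective (Quotient.mk (scS (1 : Equiv.Perm X))) ⟨?_, fun y => y.exists_rep⟩).symm
  intro x y hxy
  obtain ⟨k, hk⟩ := Quotient.exact hxy
  simpa using hk

lemma nOrbits_inv (g : Equiv.Perm X) : nOrbits g⁻¹ = nOrbits g := by
  have : scS g⁻¹ = scS g := Setoid.ext fun x y => Equiv.Perm.sameCycle_inv
  rw [nOrbits_eq, nOrbits_eq, this]

lemma nOrbG_pair_one (σ : Equiv.Perm X) :
    nOrbG (Subgroup.closure ({σ, 1} : Set (Equiv.Perm X))) = nOrbits σ := by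
  have : grS (Subgroup.closure ({σ, 1} : Set (Equiv.Perm X))) = scS σ := by
    refine Setoid.ext fun x y => ⟨?_, ?_⟩
    · refine closure_imp ?_ x y
      intro g hg z
      rcases hg with rfl | rfl
      · exact sc_step g z
      · show σ.SameCycle z ((1 : Equiv.Perm X) z)
        simpa using Equiv.Perm.SameCycle.refl σ z
    · rintro ⟨k, hk⟩
      refine grS_r.mpr ⟨(σ ^ k)⁻¹, inv_mem (zpow_mem (Subgroup.subset_closure (by simp)) k), ?_⟩
      rw [← hk]
      simp
  show Nat.card (Quotient (grS _)) = _
  rw [this, nOrbits_eq]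

lemma base_case (σ φ : Equiv.Perm X) (hprod : σ * 1 * φ = 1) :
    nOrbits σ + nOrbits (1 : Equiv.Perm X) + nOrbits φ ≤
        Nat.card X + 2 * nOrbG (Subgroup.closure ({σ, 1} : Set (Equiv.Perm X))) ∧
      Even (nOrbits σ + nOrbits (1 : Equiv.Perm X) + nOrbits φ + Nat.card X) := by
  rw [mul_one] at hprod
  have hφ : φ = σ⁻¹ := by
    rw [← inv_eq_of_mul_eq_one_right hprod]
  subst hφ
  rw [nOrbits_inv, nOrbits_one, nOrbG_pair_one]
  exact ⟨by omega, by rw [Nat.even_iff]; omega⟩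

lemma main_aux (m : ℕ) :
    ∀ (σ α φ : Equiv.Perm X), σ * α * φ = 1 → Nat.card X - nOrbits α ≤ m →
      nOrbits σ + nOrbits α + nOrbits φ ≤
          Nat.card X + 2 * nOrbG (Subgroup.closure ({σ, α} : Set (Equiv.Perm X))) ∧
        Even (nOrbits σ + nOrbits α + nOrbits φ + Nat.card X) := by
  induction m with
  | zero =>
    intro σ α φ hprod hm
    by_cases hα : α = 1
    · subst hα; exact base_case σ φ hprod
    · exfalso
      obtain ⟨a, ha⟩ : ∃ a, α a ≠ a := by
        by_contra hcon
        push_neg at hcon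
        exact hα (Equiv.ext hcon)
      have hlt : nOrbits α + 1 ≤ Nat.card X := by
        rw [nOrbits_eq]
        exact card_succ_le_of_surj (f := Quotient.mk (scS α)) (fun y => y.exists_rep)
          (p := a) (q := α a) (fun h => ha h.symm) (Quotient.sound (sc_step α a))
      omega
  | succ m ih =>
    intro σ α φ hprod hm
    by_cases hα : α = 1
    · subst hα; exact base_case σ φ hprod
    · obtain ⟨a, ha⟩ : ∃ a, α a ≠ a := by
        by_contra hcon
        push_neg at hcon
        exact hα (Equiv.ext hcon)
      set b := α a with hb
      have hab : a ≠ b := fun h => ha h.symm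
      set t := Equiv.swap a b with htdef
      have htt : t * t = 1 := Equiv.swap_mul_self a b
      set α' := α * t with hα'def
      set φ' := t * φ with hφ'def
      have hprod' : σ * α' * φ' = 1 := by
        have h1 : σ * α' * φ' = σ * α * (t * (t * φ)) := by
          rw [hα'def, hφ'def]; simp [mul_assoc]
        rw [h1, ← mul_assoc t t φ, htt, one_mul, hprod]
      have hSC : α.SameCycle a b := ⟨1, by simp [hb]⟩
      have hα'eq : nOrbits α' = nOrbits α + 1 := nOrbits_mul_swap_eq_succ hab hSC
      obtain ⟨ih1, ih2⟩ := ih σ α' φ' hprod' (by omega)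
      -- the conjugated swap
      have hswapc : Equiv.swap (φ'⁻¹ a) (φ'⁻¹ b) = φ'⁻¹ * t * φ' := by
        have h := Equiv.swap_apply_apply φ'⁻¹ a b
        rwa [inv_inv] at h
      have hcd : φ'⁻¹ a ≠ φ'⁻¹ b := fun h => hab ((φ'⁻¹).injective h)
      have hφeq : φ' * Equiv.swap (φ'⁻¹ a) (φ'⁻¹ b) = φ := by
        rw [hswapc, show φ' * (φ'⁻¹ * t * φ') = t * φ' from by group,
          hφ'def, ← mul_assoc, htt, one_mul]
      -- group inclusions
      have hsub : Subgroup.closure ({σ, α} : Set (Equiv.Perm X)) ≤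
          Subgroup.closure ({σ, α', t} : Set (Equiv.Perm X)) := by
        refine (Subgroup.closure_le _).mpr ?_
        intro x hx
        rcases hx with rfl | rfl
        · exact Subgroup.subset_closure (by simp)
        · have hx' : x = α' * t := by rw [hα'def, mul_assoc, htt, mul_one]
          rw [hx']
          exact mul_mem (Subgroup.subset_closure (by simp)) (Subgroup.subset_closure (by simp))
      by_cases hrel : (grS (Subgroup.closure ({σ, α'} : Set (Equiv.Perm X)))).r a b
      · -- swap does not disconnect
        have hG1 := nOrbG_le_of_rel hrel
        rw [← htdef] at hG1
        have hG2 := nOrbG_mono hsub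
        rcases nOrbits_mul_swap_cases φ' hcd with hc | hc <;> rw [hφeq] at hc <;>
          exact ⟨by omega, by rw [Nat.even_iff] at ih2 ⊢; omega⟩
      · -- swap disconnects
        have hφ'mem : φ' ∈ Subgroup.closure ({σ, α'} : Set (Equiv.Perm X)) := by
          rw [← inv_eq_of_mul_eq_one_right hprod']
          exact inv_mem (mul_mem (Subgroup.subset_closure (by simp))
            (Subgroup.subset_closure (by simp)))
        have hnSC : ¬ φ'.SameCycle a b := by
          rintro ⟨k, hk⟩
          refine hrel (grS_r.mpr ⟨(φ' ^ k)⁻¹, inv_mem (zpow_mem hφ'mem k), ?_⟩)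
          rw [← hk]
          simp
        have hnSC' : ¬ φ'.SameCycle (φ'⁻¹ a) (φ'⁻¹ b) := by
          rw [Perm.inv_def, Equiv.Perm.sameCycle_symm_apply_left, Equiv.Perm.sameCycle_symm_apply_right]
          exact hnSC
        have hφc1 : nOrbits φ + 1 ≤ nOrbits φ' := by
          have h := nOrbits_mul_swap_succ_le hcd hnSC'
          rwa [hφeq] at h
        have hφc2 : nOrbits φ' ≤ nOrbits φ + 1 := by
          have h := nOrbits_le_mul_swap_succ φ' (φ'⁻¹ a) (φ'⁻¹ b)
          rwa [hφeq] at h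
        have hG1 := nOrbG_le_succ σ α' a b
        rw [← htdef] at hG1
        have hG2 := nOrbG_mono hsub
        constructor
        · omega
        · rw [Nat.even_iff] at ih2 ⊢
          omega

end Main

/-- Let `X` be a finite set of cardinality `n` with permutations `σ, α, φ` satisfying
`σαφ = 1`, such that the subgroup generated by `σ` and `α` acts transitively. Then the
Euler characteristic `χ = n_σ + n_α + n_φ − n` is even and at most `2`. -/
theorem euler_char_even_le_two {X : Type*} [Finite X] [Nonempty X]
    (σ α φ : Equiv.Perm X) (hprod : σ * α * φ = 1)
    (htrans : ∀ x y : X, ∃ g ∈ Subgroup.closure ({σ, α} : Set (Equiv.Perm X)), g x = y) :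
    Even ((nOrbits σ + nOrbits α + nOrbits φ : ℤ) - Nat.card X) ∧
      (nOrbits σ + nOrbits α + nOrbits φ : ℤ) - Nat.card X ≤ 2 := by
  classical
  obtain ⟨hle, heven⟩ := main_aux (Nat.card X) σ α φ hprod (by omega)
  have hG : nOrbG (Subgroup.closure ({σ, α} : Set (Equiv.Perm X))) = 1 := by
    show Nat.card _ = 1
    rw [Nat.card_eq_one_iff_unique]
    refine ⟨⟨fun x y => ?_⟩, ⟨Quotient.mk _ (Classical.arbitrary X)⟩⟩
    refine Quotient.inductionOn₂ x y (fun x y => ?_)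
    obtain ⟨g, hg, hgy⟩ := htrans y x
    exact Quotient.sound (grS_r.mpr ⟨g, hg, hgy⟩)
  rw [hG] at hle
  obtain ⟨k, hk⟩ := heven
  refine ⟨⟨(k : ℤ) - Nat.card X, by omega⟩, by omega⟩
end
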